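/- arXiv:1708.06275 — 5 statements merged into one kernel-verified Lean document; each statement's English description precedes it below -/
import Mathlib

section
/- Let G be a finite simple graph on n ≥ 1 vertices with arboricity at most α (α a positive integer), and let ε > 0 be a real number. Then strictly more than (ε/(2+ε))·n vertices of G have degree at most (2+ε)·α. -/
/-- The number of edges of `G` with both endpoints in the vertex set `S`. -/
def SimpleGraph.edgesWithin {V : Type*} [Fintype V] [DecidableEq V]
    (G : SimpleGraph V) [DecidableRel G.Adj] (S : Finset V) : ℕ :=
  (G.edgeFinset.filter (fun e => ∀ x ∈ e, x ∈ S)).card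

/-- `G` has arboricity at most `α` in the density sense. -/
def SimpleGraph.ArboricityAtMost {V : Type*} [Fintype V] [DecidableEq V]
    (G : SimpleGraph V) [DecidableRel G.Adj] (α : ℕ) : Prop :=
  ∀ S : Finset V, 2 ≤ S.card → G.edgesWithin S ≤ α * (S.card - 1)

/-- In a finite simple graph on `n ≥ 1` vertices with arboricity at most `α`, strictly
more than `(ε/(2+ε)) * n` vertices have degree at most `(2+ε) * α`. -/
theorem stmt3 {V : Type*} [Fintype V] [DecidableEq V]
    (G : SimpleGraph V) [DecidableRel G.Adj] (α : ℕ) (hα : 0 < α)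
    (ε : ℝ) (hε : 0 < ε) (hn : 1 ≤ Fintype.card V)
    (harb : G.ArboricityAtMost α) :
    (ε / (2 + ε)) * (Fintype.card V : ℝ) <
      ((Finset.univ.filter (fun v => (G.degree v : ℝ) ≤ (2 + ε) * α)).card : ℝ) := by
  classical
  set n := Fintype.card V with hndef
  set L := Finset.univ.filter (fun v => (G.degree v : ℝ) ≤ (2 + ε) * α) with hL
  set B := Finset.univ.filter (fun v => ¬ (G.degree v : ℝ) ≤ (2 + ε) * α) with hB
  have hLB : L.card + B.card = n := by
    rw [hL, hB, Finset.card_filter_add_card_filter_not, Finset.card_univ]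
  -- edge count bound
  have hEcard : G.edgeFinset.card ≤ α * (n - 1) := by
    rcases le_or_gt 2 n with h2 | h2
    · have := harb Finset.univ (by rwa [Finset.card_univ])
      simpa [SimpleGraph.edgesWithin, Finset.card_univ] using this
    · interval_cases n
      · have hbot : G = ⊥ := by
          have hs : Fintype.card V ≤ 1 := hndef ▸ le_refl 1
          have : Subsingleton V := Fintype.card_le_one_iff_subsingleton.mp hs
          ext a b
          simp only [SimpleGraph.bot_adj, iff_false]
          intro h
          exact G.ne_of_adj h (Subsingleton.elim a b)
        simp [hbot]
  have hE : 2 * (G.edgeFinset.card : ℝ) < 2 * α * n := by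
    have h1 : (G.edgeFinset.card : ℝ) ≤ (α : ℝ) * ((n : ℝ) - 1) := by
      have := (Nat.cast_le (α := ℝ)).mpr hEcard
      push_cast [Nat.cast_sub hn] at this
      linarith
    have hαR : (1 : ℝ) ≤ α := by exact_mod_cast hα
    nlinarith
  have hsum : ∑ v, (G.degree v : ℝ) = 2 * G.edgeFinset.card := by
    rw [← Nat.cast_sum]
    exact_mod_cast congrArg (Nat.cast : ℕ → ℝ) (G.sum_degrees_eq_twice_card_edges)
  have hBsum : ((2 : ℝ) + ε) * α * B.card ≤ ∑ v ∈ B, (G.degree v : ℝ) := by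
    rw [mul_comm]
    calc (B.card : ℝ) * ((2 + ε) * ↑α) = ∑ _v ∈ B, ((2 + ε) * (α : ℝ)) := by
          rw [Finset.sum_const, nsmul_eq_mul]
      _ ≤ ∑ v ∈ B, (G.degree v : ℝ) := ?_
    apply Finset.sum_le_sum
    intro v hv
    rw [hB, Finset.mem_filter] at hv
    simpa using le_of_not_ge hv.2
  have hBle : ∑ v ∈ B, (G.degree v : ℝ) ≤ ∑ v, (G.degree v : ℝ) :=
    Finset.sum_le_sum_of_subset_of_nonneg (Finset.subset_univ B)
      (fun v _ _ => by positivity)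
  have hkey : ((2 : ℝ) + ε) * α * B.card < 2 * α * n := by
    calc ((2 : ℝ) + ε) * α * B.card ≤ ∑ v ∈ B, (G.degree v : ℝ) := hBsum
      _ ≤ ∑ v, (G.degree v : ℝ) := hBle
      _ = 2 * G.edgeFinset.card := hsum
      _ < 2 * α * n := hE
  have hαR : (0 : ℝ) < α := by exact_mod_cast hα
  have hB2 : ((2 : ℝ) + ε) * B.card < 2 * n := by
    nlinarith
  have hLn : (L.card : ℝ) = n - B.card := by
    have := congrArg (Nat.cast : ℕ → ℝ) hLB
    push_cast at this
    linarith
  have h2ε : (0 : ℝ) < 2 + ε := by linarith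
  rw [div_mul_eq_mul_div, div_lt_iff₀ h2ε, hLn]
  nlinarith
end

section
/- Let G be a finite simple graph on n vertices with arboricity at most α (α a positive integer) and let ε > 0 be a real number. Define W_0 to be the full vertex set of G, and inductively let W_{j+1} be the set of vertices v ∈ W_j whose degree in the induced subgraph G[W_j] is strictly greater than (2+ε)·α. Then for every j ≥ 0, |W_j| ≤ (2/(2+ε))^j · n. -/
lemma sum_deg_within {V : Type*} [Fintype V] [DecidableEq V]
    (G : SimpleGraph V) [DecidableRel G.Adj] (S : Finset V) :
    ∑ v ∈ S, (S.filter (fun u => G.Adj v u)).card = 2 * G.edgesWithin S := by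
  let G' : SimpleGraph V :=
    { Adj := fun v u => G.Adj v u ∧ v ∈ S ∧ u ∈ S
      symm := ⟨by rintro a b ⟨h1, h2, h3⟩; exact ⟨h1.symm, h3, h2⟩⟩
      loopless := ⟨by rintro a ⟨h, _⟩; exact G.loopless.irrefl a h⟩ }
  haveI : DecidableRel G'.Adj := fun a b => instDecidableAnd
  have hdeg : ∀ v ∈ S, G'.degree v = (S.filter (fun u => G.Adj v u)).card := by
    intro v hv
    rw [SimpleGraph.degree]
    congr 1
    ext u
    simp only [SimpleGraph.mem_neighborFinset, Finset.mem_filter]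
    constructor
    · rintro ⟨h1, _, h3⟩; exact ⟨h3, h1⟩
    · rintro ⟨h1, h2⟩; exact ⟨h2, hv, h1⟩
  have hdeg0 : ∀ v ∉ S, G'.degree v = 0 := by
    intro v hv
    rw [SimpleGraph.degree, Finset.card_eq_zero]
    ext u
    simp only [SimpleGraph.mem_neighborFinset, Finset.notMem_empty, iff_false]
    rintro ⟨_, h2, _⟩; exact hv h2
  have hedges : G'.edgeFinset.card = G.edgesWithin S := by
    unfold SimpleGraph.edgesWithin
    congr 1
    ext e
    refine Sym2.ind (fun a b => ?_) e
    simp only [SimpleGraph.mem_edgeFinset, SimpleGraph.mem_edgeSet, Finset.mem_filter,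
      Sym2.mem_iff]
    constructor
    · rintro ⟨h1, h2, h3⟩
      exact ⟨h1, by rintro x (rfl | rfl) <;> assumption⟩
    · rintro ⟨h1, h2⟩
      exact ⟨h1, h2 a (Or.inl rfl), h2 b (Or.inr rfl)⟩
  have := G'.sum_degrees_eq_twice_card_edges
  rw [← hedges, ← this]
  rw [← Finset.sum_subset (Finset.subset_univ S)]
  · exact Finset.sum_congr rfl (fun v hv => (hdeg v hv).symm)
  · intro v _ hv; exact hdeg0 v hv

lemma edgesWithin_le {V : Type*} [Fintype V] [DecidableEq V]
    (G : SimpleGraph V) [DecidableRel G.Adj] (α : ℕ)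
    (harb : G.ArboricityAtMost α) (S : Finset V) :
    G.edgesWithin S ≤ α * S.card := by
  by_cases h : 2 ≤ S.card
  · exact (harb S h).trans (Nat.mul_le_mul_left α (Nat.sub_le _ _))
  · have : G.edgesWithin S = 0 := by
      rw [SimpleGraph.edgesWithin, Finset.card_eq_zero]
      ext e
      refine Sym2.ind (fun a b => ?_) e
      simp only [Finset.mem_filter, Finset.notMem_empty, iff_false, not_and,
        SimpleGraph.mem_edgeFinset, SimpleGraph.mem_edgeSet]
      intro hab hmem
      have ha := hmem a (Sym2.mem_mk_left a b)
      have hb := hmem b (Sym2.mem_mk_right a b)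
      have : 2 ≤ S.card := Finset.one_lt_card.mpr ⟨a, ha, b, hb, hab.ne⟩
      exact h this
    omega

/-- Peeling process: `W 0` is the whole vertex set, and `W (j+1)` consists of the vertices
of `W j` whose degree inside the induced subgraph `G[W j]` exceeds `(2+ε) * α`.  Then
`|W j| ≤ (2/(2+ε))^j * n` for every `j`. -/
theorem stmt4 {V : Type*} [Fintype V] [DecidableEq V]
    (G : SimpleGraph V) [DecidableRel G.Adj] (α : ℕ) (hα : 0 < α)
    (ε : ℝ) (hε : 0 < ε)
    (harb : G.ArboricityAtMost α)
    (W : ℕ → Finset V)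
    (hW0 : W 0 = Finset.univ)
    (hWsucc : ∀ j, W (j + 1) =
      (W j).filter (fun v => (2 + ε) * α < (((W j).filter (fun u => G.Adj v u)).card : ℝ))) :
    ∀ j, ((W j).card : ℝ) ≤ (2 / (2 + ε)) ^ j * (Fintype.card V : ℝ) := by
  have h2ε : (0:ℝ) < 2 + ε := by linarith
  have hα' : (0:ℝ) < α := by exact_mod_cast hα
  have hstep : ∀ j, ((W (j+1)).card : ℝ) ≤ (2 / (2 + ε)) * (W j).card := by
    intro j
    have h1 : (2 + ε) * α * (W (j+1)).card ≤
        ∑ v ∈ W (j+1), (((W j).filter (fun u => G.Adj v u)).card : ℝ) := by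
      calc (2 + ε) * (α:ℝ) * (W (j+1)).card = ∑ _v ∈ W (j+1), (2 + ε) * (α:ℝ) := by
            rw [Finset.sum_const, nsmul_eq_mul]; ring
        _ ≤ _ := by
            refine Finset.sum_le_sum (fun v hv => ?_)
            rw [hWsucc j, Finset.mem_filter] at hv
            exact le_of_lt hv.2
    have h2 : ∑ v ∈ W (j+1), (((W j).filter (fun u => G.Adj v u)).card : ℝ) ≤
        ∑ v ∈ W j, (((W j).filter (fun u => G.Adj v u)).card : ℝ) := by
      refine Finset.sum_le_sum_of_subset_of_nonneg ?_ (fun _ _ _ => by positivity)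
      rw [hWsucc j]; exact Finset.filter_subset _ _
    have h3 : ∑ v ∈ W j, (((W j).filter (fun u => G.Adj v u)).card : ℝ) ≤
        2 * α * (W j).card := by
      have hnat : ∑ v ∈ W j, ((W j).filter (fun u => G.Adj v u)).card ≤
          2 * (α * (W j).card) := by
        rw [sum_deg_within]
        exact Nat.mul_le_mul_left 2 (edgesWithin_le G α harb (W j))
      calc ∑ v ∈ W j, (((W j).filter (fun u => G.Adj v u)).card : ℝ)
          = ((∑ v ∈ W j, ((W j).filter (fun u => G.Adj v u)).card : ℕ) : ℝ) := by
            push_cast; rfl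
        _ ≤ ((2 * (α * (W j).card) : ℕ) : ℝ) := by exact_mod_cast hnat
        _ = 2 * α * (W j).card := by push_cast; ring
    have key : (2 + ε) * α * (W (j+1)).card ≤ 2 * α * (W j).card := by linarith
    rw [div_mul_eq_mul_div, le_div_iff₀ h2ε]
    nlinarith [key]
  intro j
  induction j with
  | zero => simp [hW0]
  | succ j ih =>
      have hpos : (0:ℝ) ≤ 2 / (2 + ε) := by positivity
      calc ((W (j+1)).card : ℝ) ≤ (2 / (2 + ε)) * (W j).card := hstep j
        _ ≤ (2 / (2 + ε)) * ((2 / (2 + ε)) ^ j * (Fintype.card V : ℝ)) :=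
            mul_le_mul_of_nonneg_left ih hpos
        _ = (2 / (2 + ε)) ^ (j+1) * (Fintype.card V : ℝ) := by ring
end

section
/- Let G be a finite simple graph on n ≥ 2 vertices with arboricity at most α (α a positive integer) and let ε > 0 be a real number. Then there exist an integer ℓ ≤ ⌈log n / log((2+ε)/2)⌉ and a partition of the vertex set of G into disjoint sets H_1, H_2, …, H_ℓ such that for every j ∈ {1, …, ℓ}, every vertex v ∈ H_j has at most (2+ε)·α neighbors in the union H_j ∪ H_{j+1} ∪ … ∪ H_ℓ. -/
namespace Stmt5Aux
set_option linter.unusedSectionVars false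
variable {V : Type*} [Fintype V] [DecidableEq V] (G : SimpleGraph V) [DecidableRel G.Adj]

/-- degree of `v` inside `S`. -/
def degIn (S : Finset V) (v : V) : ℕ := (S.filter (fun u => G.Adj v u)).card

/-- restriction of `G` to `S` (as a graph on all of `V`). -/
def restrict (S : Finset V) : SimpleGraph V where
  Adj a b := G.Adj a b ∧ a ∈ S ∧ b ∈ S
  symm := ⟨by rintro a b ⟨h, ha, hb⟩; exact ⟨h.symm, hb, ha⟩⟩
  loopless := ⟨by rintro a ⟨h, _⟩; exact G.irrefl h⟩

instance (S : Finset V) : DecidableRel (restrict G S).Adj := fun a b =>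
  inferInstanceAs (Decidable (G.Adj a b ∧ a ∈ S ∧ b ∈ S))

lemma edgeFinset_restrict (S : Finset V) :
    (restrict G S).edgeFinset = G.edgeFinset.filter (fun e => ∀ x ∈ e, x ∈ S) := by
  ext e
  induction e using Sym2.ind with
  | _ a b =>
    simp only [SimpleGraph.mem_edgeFinset, Finset.mem_filter, SimpleGraph.mem_edgeSet,
      Sym2.mem_iff]
    simp only [restrict]
    constructor
    · rintro ⟨h, ha, hb⟩
      exact ⟨h, by rintro x (rfl | rfl) <;> assumption⟩
    · rintro ⟨h, hall⟩
      exact ⟨h, hall a (Or.inl rfl), hall b (Or.inr rfl)⟩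

lemma degree_restrict (S : Finset V) (v : V) (hv : v ∈ S) :
    (restrict G S).degree v = degIn G S v := by
  rw [← SimpleGraph.card_neighborFinset_eq_degree]
  unfold degIn
  congr 1
  ext u
  rw [SimpleGraph.mem_neighborFinset]
  simp [restrict, hv, and_comm]

lemma degree_restrict_zero (S : Finset V) (v : V) (hv : v ∉ S) :
    (restrict G S).degree v = 0 := by
  rw [← SimpleGraph.card_neighborFinset_eq_degree, Finset.card_eq_zero]
  ext u
  rw [SimpleGraph.mem_neighborFinset]
  simp [restrict, hv]

lemma handshake (S : Finset V) : ∑ v ∈ S, degIn G S v = 2 * G.edgesWithin S := by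
  have h1 : ∑ v, (restrict G S).degree v = 2 * (restrict G S).edgeFinset.card :=
    SimpleGraph.sum_degrees_eq_twice_card_edges _
  rw [SimpleGraph.edgesWithin, ← edgeFinset_restrict, ← h1]
  rw [← Finset.sum_subset (Finset.subset_univ S)
    (fun x _ hx => degree_restrict_zero G S x hx)]
  exact Finset.sum_congr rfl fun v hv => (degree_restrict G S v hv).symm

lemma degIn_le (S : Finset V) (v : V) (hv : v ∈ S) : degIn G S v ≤ S.card - 1 := by
  have : S.filter (fun u => G.Adj v u) ⊆ S.erase v := by
    intro u hu
    simp only [Finset.mem_filter] at hu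
    exact Finset.mem_erase.mpr ⟨fun h => G.irrefl (v := v) (h ▸ hu.2), hu.1⟩
  calc degIn G S v ≤ (S.erase v).card := Finset.card_le_card this
    _ = S.card - 1 := Finset.card_erase_of_mem hv

end Stmt5Aux

namespace Stmt5Aux
set_option linter.unusedSectionVars false
variable {V : Type*} [Fintype V] [DecidableEq V] (G : SimpleGraph V) [DecidableRel G.Adj]

/-- iterated peeling: remove all vertices of in-degree ≤ D at each step. -/
def peel (D : ℕ) : ℕ → Finset V
  | 0 => Finset.univ
  | k+1 => (peel D k).filter (fun v => D < degIn G (peel D k) v)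

lemma peel_succ_subset (D k : ℕ) : peel G D (k+1) ⊆ peel G D k :=
  Finset.filter_subset _ _

lemma peel_anti (D : ℕ) {i j : ℕ} (h : i ≤ j) : peel G D j ⊆ peel G D i := by
  induction j with
  | zero => rw [Nat.le_zero.mp h]
  | succ n ih =>
    rcases Nat.lt_or_ge i (n+1) with hlt | hge
    · exact (peel_succ_subset G D n).trans (ih (Nat.lt_succ_iff.mp hlt))
    · have : i = n + 1 := le_antisymm h hge
      subst this; exact Finset.Subset.refl _

/-- key counting bound coming from arboricity. -/
lemma key_count (α : ℕ) (harb : ∀ S : Finset V, 2 ≤ S.card →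
      G.edgesWithin S ≤ α * (S.card - 1))
    (D : ℕ) (S : Finset V) :
    (S.filter (fun v => D < degIn G S v)).card * (D + 1) ≤ 2 * (α * (S.card - 1)) := by
  set B := S.filter (fun v => D < degIn G S v) with hB
  rcases Nat.lt_or_ge S.card 2 with h2 | h2
  · have : B = ∅ := by
      rw [Finset.eq_empty_iff_forall_notMem]
      intro v hv
      rw [hB, Finset.mem_filter] at hv
      have := degIn_le G S v hv.1
      omega
    simp [this]
  · calc B.card * (D + 1) = ∑ _v ∈ B, (D + 1) := by rw [Finset.sum_const, smul_eq_mul]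
      _ ≤ ∑ v ∈ B, degIn G S v := Finset.sum_le_sum (fun v hv => by
          rw [hB, Finset.mem_filter] at hv; omega)
      _ ≤ ∑ v ∈ S, degIn G S v := Finset.sum_le_sum_of_subset (Finset.filter_subset _ _)
      _ = 2 * G.edgesWithin S := handshake G S
      _ ≤ 2 * (α * (S.card - 1)) := by
          exact Nat.mul_le_mul_left 2 (harb S h2)

end Stmt5Aux

namespace Stmt5Aux
set_option linter.unusedSectionVars false
variable {V : Type*} [Fintype V] [DecidableEq V] (G : SimpleGraph V) [DecidableRel G.Adj]

lemma shrink_step (α : ℕ) (hα : 0 < α) (ε : ℝ) (hε : 0 < ε)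
    (harb : ∀ S : Finset V, 2 ≤ S.card → G.edgesWithin S ≤ α * (S.card - 1))
    (S : Finset V) (hS : 1 ≤ S.card) :
    ((S.filter (fun v => ⌊(2+ε)*α⌋₊ < degIn G S v)).card : ℝ) * (2+ε)
      ≤ 2 * ((S.card : ℝ) - 1) := by
  set D := ⌊(2+ε)*(α:ℝ)⌋₊ with hD
  set B := S.filter (fun v => D < degIn G S v) with hB
  have hk := key_count G α harb D S
  have hcast : ((S.card - 1 : ℕ) : ℝ) = (S.card : ℝ) - 1 := by
    rw [Nat.cast_sub hS]; norm_num
  have h1 : (B.card : ℝ) * (D + 1) ≤ 2 * (α * ((S.card : ℝ) - 1)) := by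
    rw [← hcast]
    exact_mod_cast hk
  have h2 : (2+ε) * (α:ℝ) < (D:ℝ) + 1 := by
    rw [hD]; exact_mod_cast Nat.lt_floor_add_one ((2+ε)*(α:ℝ))
  have h3 : (B.card : ℝ) * ((2+ε) * α) ≤ (B.card : ℝ) * ((D:ℝ) + 1) :=
    mul_le_mul_of_nonneg_left h2.le (Nat.cast_nonneg _)
  have hα' : (0:ℝ) < α := by exact_mod_cast hα
  have h4 : ((B.card : ℝ) * (2+ε)) * α ≤ (2 * ((S.card : ℝ) - 1)) * α := by
    calc ((B.card : ℝ) * (2+ε)) * α = (B.card : ℝ) * ((2+ε) * α) := by ring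
      _ ≤ (B.card : ℝ) * ((D:ℝ) + 1) := h3
      _ ≤ 2 * (α * ((S.card : ℝ) - 1)) := h1
      _ = (2 * ((S.card : ℝ) - 1)) * α := by ring
  exact le_of_mul_le_mul_right h4 hα'

lemma peel_bound (α : ℕ) (hα : 0 < α) (ε : ℝ) (hε : 0 < ε)
    (harb : ∀ S : Finset V, 2 ≤ S.card → G.edgesWithin S ≤ α * (S.card - 1))
    (k : ℕ) :
    peel G ⌊(2+ε)*(α:ℝ)⌋₊ k = ∅ ∨
      (((peel G ⌊(2+ε)*(α:ℝ)⌋₊ k).card : ℝ) + 2/ε) * ((2+ε)/2)^k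
        ≤ (Fintype.card V : ℝ) + 2/ε := by
  set D := ⌊(2+ε)*(α:ℝ)⌋₊ with hD
  induction k with
  | zero =>
    right
    simp [peel, Finset.card_univ]
  | succ k ih =>
    rcases ih with h | h
    · left
      show (peel G D k).filter _ = ∅
      rw [h]; exact Finset.filter_empty _
    · rcases Finset.eq_empty_or_nonempty (peel G D k) with he | hne
      · left
        show (peel G D k).filter _ = ∅
        rw [he]; exact Finset.filter_empty _
      · right
        have hc1 : 1 ≤ (peel G D k).card := Finset.card_pos.mpr hne
        have hs := shrink_step G α hα ε hε harb (peel G D k) hc1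
        have hstep : (((peel G D (k+1)).card : ℝ) + 2/ε) * ((2+ε)/2)
            ≤ ((peel G D k).card : ℝ) + 2/ε := by
          have : ((peel G D (k+1)).card : ℝ) * (2+ε)
              ≤ 2 * (((peel G D k).card : ℝ) - 1) := hs
          have e1 : (2/ε) * ((2+ε)/2) = 2/ε + 1 := by field_simp
          have e2 : ((peel G D (k+1)).card : ℝ) * ((2+ε)/2)
              ≤ ((peel G D k).card : ℝ) - 1 := by linarith
          calc (((peel G D (k+1)).card : ℝ) + 2/ε) * ((2+ε)/2)
              = ((peel G D (k+1)).card : ℝ) * ((2+ε)/2) + (2/ε) * ((2+ε)/2) := by ring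
            _ ≤ (((peel G D k).card : ℝ) - 1) + (2/ε + 1) := add_le_add e2 (le_of_eq e1)
            _ = ((peel G D k).card : ℝ) + 2/ε := by ring
        have hcpos : (0:ℝ) ≤ ((2+ε)/2)^k := by positivity
        calc (((peel G D (k+1)).card : ℝ) + 2/ε) * ((2+ε)/2)^(k+1)
            = ((((peel G D (k+1)).card : ℝ) + 2/ε) * ((2+ε)/2)) * ((2+ε)/2)^k := by
              ring
          _ ≤ (((peel G D k).card : ℝ) + 2/ε) * ((2+ε)/2)^k :=
              mul_le_mul_of_nonneg_right hstep hcpos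
          _ ≤ (Fintype.card V : ℝ) + 2/ε := h

end Stmt5Aux

open Stmt5Aux in
/-- Every `n`-vertex graph (`n ≥ 2`) of arboricity at most `α` admits an `H`-partition
with degree `(2+ε) * α` and size `ℓ ≤ ⌈log n / log ((2+ε)/2)⌉`: the vertex set is
partitioned into disjoint layers `H 0, …, H (ℓ-1)` so that every vertex in layer `i`
has at most `(2+ε) * α` neighbors in the union of the layers with index `≥ i`. -/
theorem stmt5 {V : Type*} [Fintype V] [DecidableEq V]
    (G : SimpleGraph V) [DecidableRel G.Adj] (α : ℕ) (hα : 0 < α)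
    (ε : ℝ) (hε : 0 < ε) (hn : 2 ≤ Fintype.card V)
    (harb : G.ArboricityAtMost α) :
    ∃ (ℓ : ℕ) (H : Fin ℓ → Finset V),
      ℓ ≤ ⌈Real.log (Fintype.card V) / Real.log ((2 + ε) / 2)⌉₊ ∧
      (∀ i j, i ≠ j → Disjoint (H i) (H j)) ∧
      (∀ v : V, ∃ i, v ∈ H i) ∧
      (∀ i : Fin ℓ, ∀ v ∈ H i,
        ((Finset.univ.filter
            (fun u => G.Adj v u ∧ ∃ j : Fin ℓ, i ≤ j ∧ u ∈ H j)).card : ℝ) ≤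
          (2 + ε) * α) := by
  classical
  set c : ℝ := (2 + ε) / 2 with hc
  set D := ⌊(2+ε)*(α:ℝ)⌋₊ with hD
  set ℓ := ⌈Real.log (Fintype.card V) / Real.log c⌉₊ with hℓ
  have hc1 : (1:ℝ) < c := by rw [hc]; linarith
  have hlogc : 0 < Real.log c := Real.log_pos hc1
  have hn1 : (1:ℝ) < (Fintype.card V : ℝ) := by exact_mod_cast (by omega : 1 < Fintype.card V)
  have hlogn : 0 < Real.log (Fintype.card V) := Real.log_pos hn1
  have hℓpos : 0 < ℓ := Nat.ceil_pos.mpr (div_pos hlogn hlogc)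
  have hpow : ((Fintype.card V : ℕ) : ℝ) ≤ c ^ ℓ := by
    have h1 : Real.log (Fintype.card V) / Real.log c ≤ (ℓ : ℝ) := Nat.le_ceil _
    have h2 : Real.log (Fintype.card V) ≤ (ℓ : ℝ) * Real.log c := by
      rw [div_le_iff₀ hlogc] at h1; exact h1
    have h3 : Real.log (Fintype.card V) ≤ Real.log (c ^ ℓ) := by
      rw [Real.log_pow]; exact_mod_cast h2
    have hcpos : (0:ℝ) < c ^ ℓ := by positivity
    exact (Real.log_le_log_iff (by positivity) hcpos).mp h3
  have hempty : peel G D ℓ = ∅ := by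
    rcases peel_bound G α hα ε hε harb ℓ with h | h
    · exact h
    · by_contra hne
      have hc1' : 1 ≤ (peel G D ℓ).card :=
        Finset.card_pos.mpr (Finset.nonempty_of_ne_empty hne)
      have ha : (0:ℝ) < 2/ε := by positivity
      have hm : (1:ℝ) ≤ ((peel G D ℓ).card : ℝ) := by exact_mod_cast hc1'
      have h5 : ((1:ℝ) + 2/ε) * (Fintype.card V : ℝ) ≤ ((Fintype.card V : ℕ) : ℝ) + 2/ε := by
        calc ((1:ℝ)+2/ε) * (Fintype.card V : ℝ)
            ≤ (((peel G D ℓ).card : ℝ) + 2/ε) * c^ℓ := by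
              apply mul_le_mul (by linarith) hpow (by positivity) (by positivity)
          _ ≤ ((Fintype.card V : ℕ) : ℝ) + 2/ε := h
      nlinarith [h5, hn1, ha]
  set H : Fin ℓ → Finset V := fun i => peel G D i \ peel G D ((i:ℕ)+1) with hH
  have hdisj : ∀ i j : Fin ℓ, (i:ℕ) < (j:ℕ) → Disjoint (H i) (H j) := by
    intro i j hij
    rw [Finset.disjoint_left]
    intro x hxi hxj
    have hx : x ∈ peel G D ((i:ℕ)+1) :=
      peel_anti G D (by omega : (i:ℕ)+1 ≤ (j:ℕ)) (Finset.mem_sdiff.mp hxj).1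
    exact (Finset.mem_sdiff.mp hxi).2 hx
  refine ⟨ℓ, H, le_refl _, ?_, ?_, ?_⟩
  · intro i j hij
    rcases lt_or_gt_of_ne (fun h : (i:ℕ) = (j:ℕ) => hij (Fin.ext h)) with h | h
    · exact hdisj i j h
    · exact (hdisj j i h).symm
  · intro v
    have hex : ∃ k, v ∉ peel G D k := ⟨ℓ, by rw [hempty]; simp⟩
    have hm : v ∉ peel G D (Nat.find hex) := Nat.find_spec hex
    have hm0 : Nat.find hex ≠ 0 := by
      intro h
      apply hm
      rw [h]
      exact Finset.mem_univ v
    have hmle : Nat.find hex ≤ ℓ := Nat.find_le (by rw [hempty]; simp)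
    have hmem : v ∈ peel G D (Nat.find hex - 1) := by
      by_contra h
      exact (Nat.find_min hex (by omega)) h
    refine ⟨⟨Nat.find hex - 1, by omega⟩, Finset.mem_sdiff.mpr ⟨hmem, ?_⟩⟩
    have : Nat.find hex - 1 + 1 = Nat.find hex := by omega
    rw [this]
    exact hm
  · intro i v hv
    obtain ⟨hv1, hv2⟩ := Finset.mem_sdiff.mp hv
    have hdeg : degIn G (peel G D (i:ℕ)) v ≤ D := by
      by_contra h
      push_neg at h
      exact hv2 (Finset.mem_filter.mpr ⟨hv1, h⟩)
    have hsub : Finset.univ.filter (fun u => G.Adj v u ∧ ∃ j : Fin ℓ, i ≤ j ∧ u ∈ H j)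
        ⊆ (peel G D (i:ℕ)).filter (fun u => G.Adj v u) := by
      intro u hu
      simp only [Finset.mem_filter, Finset.mem_univ, true_and] at hu ⊢
      obtain ⟨hadj, j, hij, huj⟩ := hu
      exact ⟨peel_anti G D (show (i:ℕ) ≤ (j:ℕ) from hij) (Finset.mem_sdiff.mp huj).1, hadj⟩
    calc ((Finset.univ.filter
            (fun u => G.Adj v u ∧ ∃ j : Fin ℓ, i ≤ j ∧ u ∈ H j)).card : ℝ)
        ≤ (degIn G (peel G D (i:ℕ)) v : ℝ) := by
          exact_mod_cast Finset.card_le_card hsub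
      _ ≤ (D : ℝ) := by exact_mod_cast hdeg
      _ ≤ (2+ε) * α := Nat.floor_le (by positivity)
end

section
/- Let G be a finite simple graph with arboricity at most α (α a positive integer). Then G admits an acyclic orientation of its edges in which every vertex has out-degree at most 2α − 1 (i.e., there is an orientation with no directed cycle such that each vertex is the tail of at most 2α − 1 oriented edges). -/
open Finset

private lemma exists_small_degree {V : Type*} [Fintype V] [DecidableEq V]
    (G : SimpleGraph V) [DecidableRel G.Adj] (α : ℕ) (hα : 0 < α)
    (harb : G.ArboricityAtMost α) (S : Finset V) (hS : S.Nonempty) :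
    ∃ v ∈ S, (S.filter (G.Adj v)).card ≤ 2 * α - 1 := by
  by_contra hcon
  push_neg at hcon
  obtain ⟨v0, hv0⟩ := hS
  -- the one-element case is immediate
  rcases eq_or_lt_of_le (Finset.one_le_card.2 ⟨v0, hv0⟩) with h1 | h2
  · obtain ⟨w, hw⟩ := Finset.card_eq_one.1 h1.symm
    have : (S.filter (G.Adj w)).card = 0 := by
      subst hw
      rw [Finset.filter_singleton]
      simp [G.irrefl]
    have := hcon w (by simp [hw])
    omega
  · -- build the restricted graph
    let H : SimpleGraph V :=
      { Adj := fun u w => G.Adj u w ∧ u ∈ S ∧ w ∈ S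
        symm := ⟨fun u w ⟨h1, h2, h3⟩ => ⟨h1.symm, h3, h2⟩⟩
        loopless := ⟨fun u ⟨h1, _⟩ => G.ne_of_adj h1 rfl⟩ }
    haveI : DecidableRel H.Adj := fun u w => instDecidableAnd
    have hnb : ∀ v ∈ S, H.neighborFinset v = S.filter (G.Adj v) := by
      intro v hv
      ext u
      simp only [SimpleGraph.mem_neighborFinset, Finset.mem_filter, H]
      tauto
    have hdeg0 : ∀ v ∉ S, H.degree v = 0 := by
      intro v hv
      rw [SimpleGraph.degree, Finset.card_eq_zero]
      ext u
      simp only [SimpleGraph.mem_neighborFinset, Finset.notMem_empty, iff_false, H]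
      tauto
    have hsum : ∑ v ∈ S, (S.filter (G.Adj v)).card = 2 * H.edgeFinset.card := by
      rw [← SimpleGraph.sum_degrees_eq_twice_card_edges]
      rw [← Finset.sum_subset (Finset.subset_univ S) (fun v _ hv => hdeg0 v hv)]
      exact Finset.sum_congr rfl fun v hv => by rw [SimpleGraph.degree, hnb v hv]
    have hedge : H.edgeFinset = G.edgeFinset.filter (fun e => ∀ x ∈ e, x ∈ S) := by
      ext e
      refine Sym2.ind (fun u w => ?_) e
      simp only [SimpleGraph.mem_edgeFinset, Finset.mem_filter, SimpleGraph.mem_edgeSet,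
        Sym2.mem_iff, H]
      constructor
      · rintro ⟨h1, h2, h3⟩
        exact ⟨h1, fun x hx => by rcases hx with rfl | rfl <;> assumption⟩
      · rintro ⟨h1, h2⟩
        exact ⟨h1, h2 u (Or.inl rfl), h2 w (Or.inr rfl)⟩
    have hEle : H.edgeFinset.card ≤ α * (S.card - 1) := by
      rw [hedge]; exact harb S h2
    have hlow : ∀ v ∈ S, 2 * α ≤ (S.filter (G.Adj v)).card := by
      intro v hv; have := hcon v hv; omega
    have hbig : 2 * α * S.card ≤ ∑ v ∈ S, (S.filter (G.Adj v)).card := by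
      calc 2 * α * S.card = ∑ _v ∈ S, 2 * α := by rw [Finset.sum_const, smul_eq_mul, mul_comm]
        _ ≤ _ := Finset.sum_le_sum hlow
    rw [hsum] at hbig
    obtain ⟨m, hm⟩ : ∃ m, S.card = m + 1 := ⟨S.card - 1, by omega⟩
    rw [hm] at hbig hEle
    simp only [Nat.add_sub_cancel] at hEle
    have : 2 * α * (m + 1) ≤ 2 * (α * m) := le_trans hbig (by omega)
    nlinarith

private lemma exists_peel {V : Type*} [Fintype V] [DecidableEq V]
    (G : SimpleGraph V) [DecidableRel G.Adj] (α : ℕ) (hα : 0 < α)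
    (harb : G.ArboricityAtMost α) (S : Finset V) :
    ∃ L : List V, L.toFinset = S ∧ L.Nodup ∧
      ∀ v t, v :: t <:+ L → (t.filter (fun u => decide (G.Adj v u))).length ≤ 2 * α - 1 := by
  induction S using Finset.strongInduction with
  | _ S ih =>
    rcases S.eq_empty_or_nonempty with rfl | hS
    · exact ⟨[], by simp, List.nodup_nil, fun v t h => by simp [List.suffix_nil] at h⟩
    · obtain ⟨v, hv, hdeg⟩ := exists_small_degree G α hα harb S hS
      obtain ⟨L, hLS, hLnd, hLp⟩ := ih (S.erase v) (Finset.erase_ssubset hv)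
      refine ⟨v :: L, ?_, ?_, ?_⟩
      · simp [hLS, Finset.insert_erase hv]
      · exact List.nodup_cons.2 ⟨by rw [← List.mem_toFinset, hLS]; simp, hLnd⟩
      · intro w t hwt
        rcases List.suffix_cons_iff.1 hwt with h | h
        · injection h with h1 h2
          rw [h1, h2]
          have hnd : (L.filter (fun u => decide (G.Adj v u))).Nodup := hLnd.filter _
          rw [← List.toFinset_card_of_nodup hnd, List.toFinset_filter, hLS]
          refine le_trans (Finset.card_le_card ?_) hdeg
          intro u hu
          simp only [Finset.mem_filter, Finset.mem_erase, decide_eq_true_eq] at hu ⊢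
          tauto
        · exact hLp w t h

/-- Every finite simple graph of arboricity at most `α` admits an acyclic orientation
(`r` directs each edge in exactly one way and has no directed cycle, i.e. its transitive
closure is irreflexive) in which every vertex has out-degree at most `2α - 1`. -/
theorem stmt7 {V : Type*} [Fintype V] [DecidableEq V]
    (G : SimpleGraph V) [DecidableRel G.Adj] (α : ℕ) (hα : 0 < α)
    (harb : G.ArboricityAtMost α) :
    ∃ r : V → V → Prop,
      (∀ u v, G.Adj u v ↔ (r u v ∨ r v u)) ∧
      (∀ u v, ¬(r u v ∧ r v u)) ∧
      (∀ v, ¬ Relation.TransGen r v v) ∧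
      (∀ v, Nat.card {u : V // r v u} ≤ 2 * α - 1) := by
  obtain ⟨L, hLS, hLnd, hLp⟩ := exists_peel G α hα harb Finset.univ
  have hmem : ∀ v : V, v ∈ L := fun v => by
    rw [← List.mem_toFinset, hLS]; exact Finset.mem_univ v
  have hinj : ∀ u w : V, L.idxOf u = L.idxOf w → u = w := by
    intro u w h
    have hu := List.idxOf_lt_length_iff.2 (hmem u)
    have hw := List.idxOf_lt_length_iff.2 (hmem w)
    have h1 : L[L.idxOf u]'hu = L[L.idxOf w]'hw := by congr 1
    rwa [List.getElem_idxOf hu, List.getElem_idxOf hw] at h1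
  refine ⟨fun u w => G.Adj u w ∧ L.idxOf u < L.idxOf w, ?_, ?_, ?_, ?_⟩
  · intro u w
    constructor
    · intro h
      have hne : L.idxOf u ≠ L.idxOf w := fun he => G.ne_of_adj h (hinj u w he)
      rcases Nat.lt_or_ge (L.idxOf u) (L.idxOf w) with h1 | h1
      · exact Or.inl ⟨h, h1⟩
      · exact Or.inr ⟨h.symm, by omega⟩
    · rintro (⟨h, _⟩ | ⟨h, _⟩)
      · exact h
      · exact h.symm
  · rintro u w ⟨⟨_, h1⟩, ⟨_, h2⟩⟩; omega
  · intro v hv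
    have key : ∀ a b : V, Relation.TransGen
        (fun u w => G.Adj u w ∧ L.idxOf u < L.idxOf w) a b →
        L.idxOf a < L.idxOf b := by
      intro a b h
      induction h with
      | single h => exact h.2
      | tail _ h ih => exact ih.trans h.2
    exact lt_irrefl _ (key v v hv)
  · intro v
    haveI : DecidablePred (fun u => G.Adj v u ∧ L.idxOf v < L.idxOf u) :=
      fun u => instDecidableAnd
    rw [Nat.card_eq_fintype_card, Fintype.card_subtype]
    have hiv : L.idxOf v < L.length := List.idxOf_lt_length_iff.2 (hmem v)
    have hdropeq : L.drop (L.idxOf v) = v :: L.drop (L.idxOf v + 1) := by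
      rw [List.drop_eq_getElem_cons hiv, List.getElem_idxOf hiv]
    have hsuf : v :: L.drop (L.idxOf v + 1) <:+ L := by
      rw [← hdropeq]; exact List.drop_suffix _ L
    have hb := hLp v (L.drop (L.idxOf v + 1)) hsuf
    refine le_trans (le_trans (Finset.card_le_card ?_) (List.toFinset_card_le _)) hb
    intro u hu
    simp only [Finset.mem_filter, Finset.mem_univ, true_and] at hu
    rw [List.mem_toFinset, List.mem_filter]
    refine ⟨?_, by simp [hu.1]⟩
    have hju : L.idxOf u < L.length := List.idxOf_lt_length_iff.2 (hmem u)
    obtain ⟨k, hk⟩ : ∃ k, L.idxOf u = (L.idxOf v + 1) + k := ⟨L.idxOf u - (L.idxOf v + 1), by omega⟩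
    have hklt : k < (L.drop (L.idxOf v + 1)).length := by
      rw [List.length_drop]; omega
    have : (L.drop (L.idxOf v + 1))[k]'hklt = u := by
      rw [List.getElem_drop, ← List.getElem_idxOf hju]
      congr 1
      omega
    exact this ▸ List.getElem_mem hklt
end

section
/- Let V be a finite set with |V| = n ≥ 2, let r be a binary relation on V (a directed graph) in which every vertex has at most d out-neighbors, where d ≥ 2. Let (X_v)_{v ∈ V} be a family of independent {0,1}-valued random variables with P[X_v = 1] ≤ d^{−2} for every v. Set L = ⌈11 · log₂ n⌉. Then the probability that there exists a directed simple path v_0, v_1, …, v_L (with all vertices distinct and r(v_i, v_{i+1}) for all i) such that X_{v_i} = 1 for every 0 ≤ i ≤ L is at most n^{−10}. In other words, with high probability the subgraph induced by the vertices v with X_v = 1 contains no directed path with more than O(log n) vertices. -/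
open MeasureTheory ProbabilityTheory
open scoped ENNReal

lemma walk_count {V : Type*} [Fintype V] (d m : ℕ) (r : V → V → Prop)
    (hdeg : ∀ v : V, Nat.card {u : V // r v u} ≤ d) :
    Nat.card {w : Fin (m+1) → V // ∀ i : Fin m, r (w i.castSucc) (w i.succ)}
      ≤ Fintype.card V * d ^ m := by
  classical
  have he : ∀ v : V, Nonempty ({u : V // r v u} ↪ Fin d) := fun v =>
    Function.Embedding.nonempty_iff_card_le.2
      (by simpa [Nat.card_eq_fintype_card] using hdeg v)
  let e : ∀ v : V, {u : V // r v u} ↪ Fin d := fun v => (he v).some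
  have key : ∀ a b : V, a = b → ∀ (x : {u // r a u}) (y : {u // r b u}),
      (e a x : Fin d) = e b y → (x : V) = (y : V) := by
    rintro a _ rfl x y h
    exact congrArg Subtype.val ((e a).injective h)
  have : Function.Injective
      (fun w : {w : Fin (m+1) → V // ∀ i : Fin m, r (w i.castSucc) (w i.succ)} =>
        ((w.1 0, fun i : Fin m => e (w.1 i.castSucc) ⟨w.1 i.succ, w.2 i⟩) :
          V × (Fin m → Fin d))) := by
    rintro ⟨w, hw⟩ ⟨w', hw'⟩ h
    simp only [Prod.mk.injEq] at h
    obtain ⟨h0, h1⟩ := h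
    ext i
    refine Fin.induction ?_ ?_ i
    · exact h0
    · intro j ih
      exact key _ _ ih _ _ (congrFun h1 j)
  calc Nat.card {w : Fin (m+1) → V // ∀ i : Fin m, r (w i.castSucc) (w i.succ)}
      ≤ Nat.card (V × (Fin m → Fin d)) := Nat.card_le_card_of_injective _ this
    _ = Fintype.card V * d ^ m := by simp [Nat.card_eq_fintype_card]

lemma pow_log_le (n : ℕ) (hn2 : 2 ≤ n) : n ^ 11 ≤ 2 ^ ⌈11 * Real.logb 2 n⌉₊ := by
  have hn1 : (1:ℝ) ≤ (n:ℝ) := by exact_mod_cast hn2.trans' (by norm_num)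
  have h1 : ((n:ℝ)) ^ (11:ℕ) ≤ (2:ℝ) ^ (⌈11 * Real.logb 2 (n:ℝ)⌉₊ : ℕ) := by
    have hlog : Real.logb 2 ((n:ℝ) ^ (11:ℕ)) = 11 * Real.logb 2 (n:ℝ) := by
      rw [Real.logb_pow]; push_cast; ring
    have hrw : ((n:ℝ))^(11:ℕ) = (2:ℝ) ^ (Real.logb 2 ((n:ℝ)^(11:ℕ))) :=
      (Real.rpow_logb (by norm_num) (by norm_num) (by positivity)).symm
    rw [hrw, hlog, ← Real.rpow_natCast 2]
    exact Real.rpow_le_rpow_of_exponent_le (by norm_num) (Nat.le_ceil _)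
  exact_mod_cast h1

/-- In a directed graph on `n ≥ 2` vertices with out-degrees at most `d ≥ 2`, if each
vertex survives independently with probability at most `d⁻²`, then with probability at
least `1 - n⁻¹⁰` the surviving vertices contain no directed simple path with
`L + 1 = ⌈11 log₂ n⌉ + 1` vertices, i.e. no directed path longer than `O(log n)`. -/
theorem stmt12 {Ω : Type*} [MeasurableSpace Ω] (P : Measure Ω) [IsProbabilityMeasure P]
    {V : Type*} [Fintype V] (n d : ℕ)
    (hn : Fintype.card V = n) (hn2 : 2 ≤ n) (hd : 2 ≤ d)
    (r : V → V → Prop)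
    (hdeg : ∀ v : V, Nat.card {u : V // r v u} ≤ d)
    (X : V → Ω → Bool)
    (hmeas : ∀ v, Measurable (X v))
    (hindep : iIndepFun X P)
    (hX : ∀ v, P {ω | X v ω = true} ≤ ((d : ℝ≥0∞) ^ 2)⁻¹) :
    P {ω | ∃ v : Fin (⌈11 * Real.logb 2 n⌉₊ + 1) → V,
        Function.Injective v ∧
        (∀ i : Fin ⌈11 * Real.logb 2 n⌉₊, r (v i.castSucc) (v i.succ)) ∧
        (∀ i, X (v i) ω = true)} ≤ ((n : ℝ≥0∞) ^ 10)⁻¹ := by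
  classical
  set L := ⌈11 * Real.logb 2 (n:ℝ)⌉₊ with hLdef
  set T : Finset (Fin (L+1) → V) := Finset.univ.filter
    (fun v => Function.Injective v ∧ ∀ i : Fin L, r (v i.castSucc) (v i.succ)) with hT
  have hsub : {ω | ∃ v : Fin (L+1) → V, Function.Injective v ∧
        (∀ i : Fin L, r (v i.castSucc) (v i.succ)) ∧ (∀ i, X (v i) ω = true)}
      ⊆ ⋃ v ∈ T, ⋂ i, X (v i) ⁻¹' {true} := by
    rintro ω ⟨v, h1, h2, h3⟩
    exact Set.mem_biUnion (Finset.mem_filter.2 ⟨Finset.mem_univ v, h1, h2⟩) (Set.mem_iInter.2 fun i => h3 i)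
  have hone : ∀ v : Fin (L+1) → V, Function.Injective v →
      P (⋂ i, X (v i) ⁻¹' {true}) ≤ (((d:ℝ≥0∞)^2)⁻¹) ^ (L+1) := by
    intro v hv
    have himg : (⋂ i, X (v i) ⁻¹' {true})
        = ⋂ u ∈ Finset.image v Finset.univ, X u ⁻¹' {true} := by
      ext ω; simp
    rw [himg, hindep.meas_biInter (fun u _ => ⟨{true}, measurableSet_singleton true, rfl⟩)]
    calc ∏ u ∈ Finset.image v Finset.univ, P (X u ⁻¹' {true})
        ≤ ∏ u ∈ Finset.image v Finset.univ, ((d:ℝ≥0∞)^2)⁻¹ :=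
          Finset.prod_le_prod' (fun u _ => hX u)
      _ = (((d:ℝ≥0∞)^2)⁻¹) ^ (L+1) := by
          rw [Finset.prod_const, Finset.card_image_of_injective _ hv, Finset.card_univ,
            Fintype.card_fin]
  have hTcard : T.card ≤ n * d ^ L := by
    have h1 : T.card ≤ Nat.card {w : Fin (L+1) → V //
        ∀ i : Fin L, r (w i.castSucc) (w i.succ)} := by
      rw [Nat.card_eq_fintype_card, Fintype.card_subtype]
      apply Finset.card_le_card
      intro v hv
      simp only [hT, Finset.mem_filter] at hv ⊢
      exact ⟨hv.1, hv.2.2⟩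
    exact h1.trans (by simpa [hn] using walk_count d L r hdeg)
  have hnat : T.card * n ^ 10 ≤ d ^ (2 * (L + 1)) := by
    calc T.card * n ^ 10 ≤ (n * d ^ L) * n ^ 10 := Nat.mul_le_mul_right _ hTcard
      _ = n ^ 11 * d ^ L := by ring
      _ ≤ 2 ^ L * d ^ L := Nat.mul_le_mul_right _ (pow_log_le n hn2)
      _ ≤ d ^ L * d ^ L := Nat.mul_le_mul_right _ (Nat.pow_le_pow_left hd L)
      _ = d ^ (2 * L) := by rw [← pow_add]; ring_nf
      _ ≤ d ^ (2 * (L + 1)) := Nat.pow_le_pow_right (by omega) (by omega)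
  have hd0 : (d : ℝ≥0∞) ^ (2 * (L + 1)) ≠ 0 :=
    pow_ne_zero _ (by exact_mod_cast (by omega : d ≠ 0))
  have hdt : (d : ℝ≥0∞) ^ (2 * (L + 1)) ≠ ⊤ := ENNReal.pow_ne_top (ENNReal.natCast_ne_top d)
  calc P {ω | ∃ v : Fin (L+1) → V, Function.Injective v ∧
        (∀ i : Fin L, r (v i.castSucc) (v i.succ)) ∧ (∀ i, X (v i) ω = true)}
      ≤ P (⋃ v ∈ T, ⋂ i, X (v i) ⁻¹' {true}) := measure_mono hsub
    _ ≤ ∑ v ∈ T, P (⋂ i, X (v i) ⁻¹' {true}) := measure_biUnion_finset_le _ _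
    _ ≤ ∑ _v ∈ T, (((d:ℝ≥0∞)^2)⁻¹) ^ (L+1) := Finset.sum_le_sum (fun v hv =>
        hone v (by simp only [hT, Finset.mem_filter] at hv; exact hv.2.1))
    _ = (T.card : ℝ≥0∞) * (((d:ℝ≥0∞)^2)⁻¹) ^ (L+1) := by
        rw [Finset.sum_const, nsmul_eq_mul]
    _ ≤ ((n : ℝ≥0∞) ^ 10)⁻¹ := by
        rw [← ENNReal.inv_pow, ← pow_mul, ENNReal.le_inv_iff_mul_le]
        have h2 : (T.card : ℝ≥0∞) * ((d:ℝ≥0∞) ^ (2 * (L+1)))⁻¹ * (n:ℝ≥0∞) ^ 10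
            = ((T.card * n ^ 10 : ℕ) : ℝ≥0∞) * ((d:ℝ≥0∞) ^ (2 * (L+1)))⁻¹ := by
          push_cast; ring
        have h3 : ((T.card * n ^ 10 : ℕ) : ℝ≥0∞) ≤ ((d ^ (2*(L+1)) : ℕ) : ℝ≥0∞) :=
          Nat.cast_le.2 hnat
        have h4 : ((d ^ (2*(L+1)) : ℕ) : ℝ≥0∞) = (d:ℝ≥0∞) ^ (2*(L+1)) := by push_cast; rfl
        rw [h2]
        refine le_trans (mul_le_mul_left h3 _) ?_
        rw [h4, ENNReal.mul_inv_cancel hd0 hdt]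
end
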